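/- For all $t > 0$ and $k > 0$, $\int_{\mathbb{R}} \frac{e^{-t\lambda^2}}{i\lambda + k}\, d\lambda = \int_{\mathbb{R}} \frac{k\, e^{-t\lambda^2}}{\lambda^2 + k^2}\, d\lambda = \pi\, e^{k^2 t}\, \mathrm{erfc}(k\sqrt{t})$, where $\mathrm{erfc}(x) = \frac{2}{\sqrt{\pi}} \int_x^\infty e^{-u^2}\, du$ is the complementary error function. -/

import Mathlib

open Real Complex MeasureTheory

/-- The complementary error function `erfc x = (2/√π) ∫_x^∞ e^{-u²} du`. -/
noncomputable def erfc (x : ℝ) : ℝ :=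
  2 / Real.sqrt π * ∫ u in Set.Ioi x, Real.exp (-u ^ 2)

section Aux

open Set

variable {t k : ℝ}

variable {t k : ℝ}

lemma myOfReal (f : ℝ → ℝ) : ∫ x, ((f x:ℝ):ℂ) = ((∫ x, f x : ℝ):ℂ) := integral_ofReal

lemma int1 (ht : 0 < t) (hk : 0 < k) :
    Integrable (fun lam : ℝ => k * Real.exp (-t * lam ^ 2) / (lam ^ 2 + k ^ 2)) := by
  refine (Integrable.mono' ((integrable_exp_neg_mul_sq ht).const_mul (1/k))
    ?_ (Filter.Eventually.of_forall fun x => ?_))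
  · apply Measurable.aestronglyMeasurable; fun_prop
  · have h1 : (0:ℝ) < x ^ 2 + k ^ 2 := by positivity
    rw [Real.norm_eq_abs, abs_div, abs_of_pos h1, abs_of_pos (by positivity)]
    rw [div_le_iff₀ h1]
    have : k * k ≤ (x^2 + k^2) := by nlinarith
    have he : (0:ℝ) < Real.exp (-t * x^2) := Real.exp_pos _
    calc k * Real.exp (-t * x ^ 2) = (k*k) * (1/k * Real.exp (-t*x^2)) := by field_simp
    _ ≤ (x^2+k^2) * (1/k * Real.exp (-t*x^2)) := by
        apply mul_le_mul_of_nonneg_right this; positivity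
    _ = 1 / k * Real.exp (-t * x ^ 2) * (x ^ 2 + k ^ 2) := by ring

lemma int2 (ht : 0 < t) (hk : 0 < k) :
    Integrable (fun lam : ℝ => lam * Real.exp (-t * lam ^ 2) / (lam ^ 2 + k ^ 2)) := by
  refine (Integrable.mono' ((integrable_exp_neg_mul_sq ht).const_mul (1/(2*k)))
    ?_ (Filter.Eventually.of_forall fun x => ?_))
  · apply Measurable.aestronglyMeasurable; fun_prop
  · have h1 : (0:ℝ) < x ^ 2 + k ^ 2 := by positivity
    rw [Real.norm_eq_abs, abs_div, abs_of_pos h1, abs_mul, abs_of_pos (Real.exp_pos _)]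
    rw [div_le_iff₀ h1]
    have h2 : |x| * (2*k) ≤ x^2 + k^2 := by nlinarith [abs_nonneg x, _root_.sq_abs x, sq_nonneg (|x| - k)]
    have he : (0:ℝ) < Real.exp (-t * x^2) := Real.exp_pos _
    calc |x| * Real.exp (-t * x ^ 2) = (|x| * (2*k)) * (1/(2*k) * Real.exp (-t*x^2)) := by
          field_simp
    _ ≤ (x^2+k^2) * (1/(2*k) * Real.exp (-t*x^2)) := by
        apply mul_le_mul_of_nonneg_right h2; positivity
    _ = 1 / (2*k) * Real.exp (-t * x ^ 2) * (x ^ 2 + k ^ 2) := by ring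

lemma part1 (ht : 0 < t) (hk : 0 < k) :
    (∫ lam : ℝ, Complex.exp (-(t : ℂ) * (lam : ℂ) ^ 2) / (Complex.I * lam + k)) =
      ((∫ lam : ℝ, k * Real.exp (-t * lam ^ 2) / (lam ^ 2 + k ^ 2) : ℝ) : ℂ) := by
  have hptw : ∀ lam : ℝ, Complex.exp (-(t : ℂ) * (lam : ℂ) ^ 2) / (Complex.I * lam + k) =
      ((k * Real.exp (-t * lam ^ 2) / (lam ^ 2 + k ^ 2) : ℝ) : ℂ)
        - Complex.I * ((lam * Real.exp (-t * lam ^ 2) / (lam ^ 2 + k ^ 2) : ℝ) : ℂ) := by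
    intro lam
    have hne : Complex.I * lam + k ≠ 0 := by
      intro h
      have := congrArg Complex.re h
      simp at this
      exact hk.ne' this
    have hden : ((lam:ℂ) ^ 2 + (k:ℂ) ^ 2) ≠ 0 := by
      have : ((lam:ℂ)^2 + (k:ℂ)^2) = ((lam^2 + k^2 : ℝ) : ℂ) := by push_cast; ring
      rw [this, ne_eq, Complex.ofReal_eq_zero]
      positivity
    have hexp : Complex.exp (-(t : ℂ) * (lam : ℂ) ^ 2) =
        ((Real.exp (-t * lam ^ 2) : ℝ) : ℂ) := by
      rw [Complex.ofReal_exp]; push_cast; ring_nf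
    rw [div_eq_iff hne, hexp]
    push_cast
    field_simp
    ring_nf
    simp only [Complex.I_sq]
    ring
  simp_rw [hptw]
  rw [integral_sub (by exact (int1 ht hk).ofReal) (by exact ((int2 ht hk).ofReal).const_mul Complex.I),
    integral_const_mul, myOfReal, myOfReal]
  have hodd : (∫ lam : ℝ, lam * Real.exp (-t * lam ^ 2) / (lam ^ 2 + k ^ 2)) = 0 := by
    set f : ℝ → ℝ := fun lam => lam * Real.exp (-t * lam ^ 2) / (lam ^ 2 + k ^ 2) with hf
    have h := integral_neg_eq_self f (volume : Measure ℝ)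
    have hoddf : ∀ x, f (-x) = - f x := by
      intro x; simp only [hf]; ring_nf
    simp_rw [hoddf] at h
    rw [integral_neg] at h
    linarith
  rw [hodd]
  simp

lemma expIoi (a : ℝ) (ha : 0 < a) (t : ℝ) :
    ∫ s in Ioi t, Real.exp (-(s * a)) = Real.exp (-(t * a)) / a := by
  have := integral_comp_mul_right_Ioi (fun x => Real.exp (-x)) t ha
  simpa [integral_exp_neg_Ioi, integral_exp_Iic, smul_eq_mul, div_eq_inv_mul] using this

lemma step_b (ht : 0 < t) (hk : 0 < k) (lam : ℝ) :
    k * Real.exp (-(t * (lam ^ 2 + k ^ 2))) / (lam ^ 2 + k ^ 2) =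
      ∫ s in Ioi t, k * Real.exp (-(s * (lam ^ 2 + k ^ 2))) := by
  have ha : (0:ℝ) < lam ^ 2 + k ^ 2 := by positivity
  rw [integral_const_mul, expIoi _ ha]
  ring

lemma fub (ht : 0 < t) (hk : 0 < k) :
    (∫ lam : ℝ, ∫ s in Ioi t, k * Real.exp (-(s * (lam ^ 2 + k ^ 2)))) =
      ∫ s in Ioi t, ∫ lam : ℝ, k * Real.exp (-(s * (lam ^ 2 + k ^ 2))) := by
  apply integral_integral_swap
  have hmeas : AEStronglyMeasurable
      (Function.uncurry fun (lam : ℝ) (s : ℝ) => k * Real.exp (-(s * (lam ^ 2 + k ^ 2))))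
      ((volume : Measure ℝ).prod (volume.restrict (Ioi t))) := by
    apply Continuous.aestronglyMeasurable
    apply Continuous.mul continuous_const
    apply Real.continuous_exp.comp
    fun_prop
  refine Integrable.mono' ((integrable_exp_neg_mul_sq ht).mul_prod
    ((exp_neg_integrableOn_Ioi t (show (0:ℝ) < k^2 by positivity)).const_mul k)) hmeas ?_
  have hset : ((volume : Measure ℝ).prod (volume.restrict (Ioi t)))
      {p : ℝ × ℝ | p.2 ∉ Ioi t} = 0 := by
    rw [show {p : ℝ × ℝ | p.2 ∉ Ioi t} = Set.univ ×ˢ (Ioi t)ᶜ by ext p; simp,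
      Measure.prod_prod, Measure.restrict_apply (measurableSet_Ioi.compl)]
    rw [Set.compl_inter_self]
    simp
  have hae : ∀ᵐ p ∂((volume : Measure ℝ).prod (volume.restrict (Ioi t))),
      p.2 ∈ Ioi t := by
    rw [Filter.eventually_iff, mem_ae_iff]
    convert hset using 2
    rfl
  filter_upwards [hae] with p hp
  have hs : t ≤ p.2 := le_of_lt hp
  simp only [Function.uncurry]
  rw [Real.norm_eq_abs, abs_of_pos (by positivity)]
  have : -(p.2 * (p.1 ^ 2 + k ^ 2)) = -p.2 * p.1 ^ 2 + -k ^ 2 * p.2 := by ring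
  rw [this, Real.exp_add]
  have h1 : Real.exp (-p.2 * p.1 ^ 2) ≤ Real.exp (-t * p.1 ^ 2) := by
    apply Real.exp_le_exp.2
    nlinarith [sq_nonneg p.1]
  calc k * (Real.exp (-p.2 * p.1 ^ 2) * Real.exp (-k ^ 2 * p.2))
      ≤ k * (Real.exp (-t * p.1 ^ 2) * Real.exp (-k ^ 2 * p.2)) := by
        apply mul_le_mul_of_nonneg_left _ hk.le
        apply mul_le_mul_of_nonneg_right h1 (Real.exp_pos _).le
    _ = Real.exp (-t * p.1 ^ 2) * (k * Real.exp (-k ^ 2 * p.2)) := by ring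

lemma step_d (hk : 0 < k) (s : ℝ) :
    (∫ lam : ℝ, k * Real.exp (-(s * (lam ^ 2 + k ^ 2)))) =
      k * Real.exp (-(s * k ^ 2)) * Real.sqrt (π / s) := by
  have : ∀ lam : ℝ, k * Real.exp (-(s * (lam ^ 2 + k ^ 2))) =
      (k * Real.exp (-(s * k ^ 2))) * Real.exp (-s * lam ^ 2) := by
    intro lam
    rw [mul_assoc, ← Real.exp_add]
    ring_nf
  simp_rw [this]
  rw [integral_const_mul, integral_gaussian]

lemma step_e (ht : 0 < t) (hk : 0 < k) :
    (∫ s in Ioi t, k * Real.exp (-(s * k ^ 2)) * Real.sqrt (π / s)) =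
      2 * Real.sqrt π * ∫ u in Ioi (k * Real.sqrt t), Real.exp (-u ^ 2) := by
  set a : ℝ := k * Real.sqrt t with ha_def
  have ha : 0 < a := by positivity
  set f : ℝ → ℝ := fun u => (u / k) ^ 2 with hf_def
  set f' : ℝ → ℝ := fun u => 2 * u / k ^ 2 with hf'_def
  set g : ℝ → ℝ := fun s => k * Real.exp (-(s * k ^ 2)) * Real.sqrt (π / s) with hg_def
  have hfa : f a = t := by
    simp only [hf_def, ha_def]
    rw [mul_comm, mul_div_assoc, div_self hk.ne', mul_one, Real.sq_sqrt ht.le]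
  have himg_Ici : f '' Ici a = Ici t := by
    ext s
    constructor
    · rintro ⟨u, hu, rfl⟩
      have hua : a ≤ u := hu
      have : a / k ≤ u / k := by gcongr
      have h2 : (a / k) ^ 2 ≤ (u / k) ^ 2 := by
        apply pow_le_pow_left₀ (by positivity) this
      simpa [hf_def, ← hfa] using h2
    · intro hs
      have hst : t ≤ s := hs
      have hs0 : 0 < s := lt_of_lt_of_le ht hst
      refine ⟨k * Real.sqrt s, ?_, ?_⟩
      · simp only [mem_Ici, ha_def]
        exact mul_le_mul_of_nonneg_left (Real.sqrt_le_sqrt hst) hk.le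
      · simp only [hf_def]
        rw [mul_comm, mul_div_assoc, div_self hk.ne', mul_one, Real.sq_sqrt hs0.le]
  have himg_Ioi : f '' Ioi a ⊆ Ioi (0:ℝ) := by
    rintro s ⟨u, hu, rfl⟩
    have : 0 < u := lt_trans ha hu
    simp only [hf_def, mem_Ioi]
    positivity
  have heq : EqOn (fun u => 2 * Real.sqrt π * Real.exp (-u ^ 2)) (fun u => (g ∘ f) u * f' u)
      (Ici a) := by
    intro u hu
    have hu0 : 0 < u := lt_of_lt_of_le ha hu
    simp only [hg_def, hf_def, hf'_def, Function.comp]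
    have h1 : (u / k) ^ 2 * k ^ 2 = u ^ 2 := by field_simp
    have h2 : Real.sqrt (π / (u / k) ^ 2) = Real.sqrt π * (k / u) := by
      rw [Real.sqrt_div pi_nonneg, Real.sqrt_sq (by positivity)]
      field_simp
    rw [h1, h2]
    field_simp
  have key := integral_comp_mul_deriv_Ioi (f := f) (f' := f') (g := g) (a := a)
    ?_ ?_ ?_ ?_ ?_ ?_
  · rw [hfa] at key
    rw [← key]
    rw [← setIntegral_congr_fun measurableSet_Ioi (heq.mono Ioi_subset_Ici_self)]
    rw [integral_const_mul]
  · exact (continuous_pow 2).continuousOn.comp ((continuous_id.div_const k).continuousOn)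
      (mapsTo_univ _ _)
  · have h1 : Filter.Tendsto (fun u : ℝ => u / k) Filter.atTop Filter.atTop :=
      Filter.tendsto_id.atTop_div_const hk
    exact (Filter.tendsto_pow_atTop two_ne_zero).comp h1
  · intro x hx
    have : HasDerivAt f (2 * x / k ^ 2) x := by
      have h := ((hasDerivAt_id x).div_const k).pow 2
      norm_num at h
      convert h using 1
      all_goals first | rfl | ring
    exact this.hasDerivWithinAt
  · -- ContinuousOn g (f '' Ioi a)
    apply ContinuousOn.mono _ himg_Ioi
    apply ContinuousOn.mul
    · exact (continuous_const.mul (Real.continuous_exp.comp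
        (continuous_neg.comp (continuous_id.mul continuous_const)))).continuousOn
    · exact Real.continuous_sqrt.comp_continuousOn
        (continuousOn_const.div continuousOn_id fun x hx => ne_of_gt hx)
  · -- IntegrableOn g (f '' Ici a)
    rw [himg_Ici]
    rw [integrableOn_Ici_iff_integrableOn_Ioi]
    refine Integrable.mono' (((exp_neg_integrableOn_Ioi t
      (show (0:ℝ) < k^2 by positivity))).const_mul (k * Real.sqrt (π / t))) ?_ ?_
    · apply Measurable.aestronglyMeasurable
      fun_prop
    · filter_upwards [ae_restrict_mem measurableSet_Ioi] with s hs
      have hs0 : 0 < s := lt_trans ht hs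
      have hnorm : ‖g s‖ = k * Real.exp (-(s * k ^ 2)) * Real.sqrt (π / s) := by
        rw [Real.norm_eq_abs, _root_.abs_of_nonneg (by positivity)]
      rw [hnorm]
      have hsq : Real.sqrt (π / s) ≤ Real.sqrt (π / t) :=
        Real.sqrt_le_sqrt (div_le_div_of_nonneg_left pi_nonneg ht (le_of_lt hs))
      calc k * Real.exp (-(s * k ^ 2)) * Real.sqrt (π / s)
          ≤ k * Real.exp (-(s * k ^ 2)) * Real.sqrt (π / t) := by
            apply mul_le_mul_of_nonneg_left hsq (by positivity)
        _ = k * Real.sqrt (π / t) * Real.exp (-k ^ 2 * s) := by ring_nf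
  · -- IntegrableOn ((g ∘ f) * f') (Ici a)
    refine IntegrableOn.congr_fun ?_ heq measurableSet_Ici
    apply Integrable.integrableOn
    have : Integrable (fun u : ℝ => Real.exp (-1 * u ^ 2)) := integrable_exp_neg_mul_sq one_pos
    simpa using this.const_mul (2 * Real.sqrt π)

lemma part2 (ht : 0 < t) (hk : 0 < k) :
    (∫ lam : ℝ, k * Real.exp (-t * lam ^ 2) / (lam ^ 2 + k ^ 2)) =
      π * Real.exp (k ^ 2 * t) * erfc (k * Real.sqrt t) := by
  have hptw : ∀ lam : ℝ, k * Real.exp (-t * lam ^ 2) / (lam ^ 2 + k ^ 2) =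
      Real.exp (k ^ 2 * t) * (k * Real.exp (-(t * (lam ^ 2 + k ^ 2))) / (lam ^ 2 + k ^ 2)) := by
    intro lam
    have h : Real.exp (k ^ 2 * t) * Real.exp (-(t * (lam ^ 2 + k ^ 2))) =
        Real.exp (-t * lam ^ 2) := by
      rw [← Real.exp_add]; ring_nf
    rw [show Real.exp (k ^ 2 * t) * (k * Real.exp (-(t * (lam ^ 2 + k ^ 2))) / (lam ^ 2 + k ^ 2))
        = k * (Real.exp (k ^ 2 * t) * Real.exp (-(t * (lam ^ 2 + k ^ 2)))) / (lam ^ 2 + k ^ 2)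
      from by ring, h]
  simp_rw [hptw, step_b ht hk]
  rw [integral_const_mul, fub ht hk]
  simp_rw [step_d hk]
  rw [step_e ht hk, erfc]
  have hsq : Real.sqrt π * Real.sqrt π = π := Real.mul_self_sqrt pi_nonneg
  have hπ : Real.sqrt π ≠ 0 := by positivity
  set X := ∫ u in Ioi (k * Real.sqrt t), Real.exp (-u ^ 2) with hX
  have h2 : π * (2 / Real.sqrt π) = 2 * Real.sqrt π := by
    field_simp
    nlinarith [hsq]
  rw [show π * Real.exp (k ^ 2 * t) * (2 / Real.sqrt π * X)
      = (π * (2 / Real.sqrt π)) * (Real.exp (k ^ 2 * t) * X) from by ring, h2]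
  ring

end Aux

theorem stmt4 (t k : ℝ) (ht : 0 < t) (hk : 0 < k) :
    (∫ lam : ℝ, Complex.exp (-(t : ℂ) * (lam : ℂ) ^ 2) / (Complex.I * lam + k)) =
      ((∫ lam : ℝ, k * Real.exp (-t * lam ^ 2) / (lam ^ 2 + k ^ 2) : ℝ) : ℂ) ∧
    (∫ lam : ℝ, k * Real.exp (-t * lam ^ 2) / (lam ^ 2 + k ^ 2)) =
      π * Real.exp (k ^ 2 * t) * erfc (k * Real.sqrt t) :=
  ⟨part1 ht hk, part2 ht hk⟩
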